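/- For n ≥ 3, the restricted 2-critical number of Z_n equals ⌊n/2⌋ + 2; that is, every subset A of Z_n with |A| ≥ ⌊n/2⌋ + 2 satisfies {a + b : a, b ∈ A, a ≠ b} = Z_n, and there is a subset of size ⌊n/2⌋ + 1 whose restricted 2-fold sumset is not all of Z_n. -/
import Mathlib


/-- The `h`-fold restricted sumset of a finite set `A`: all sums of `h`
pairwise distinct elements of `A`. -/
def restSumset {G : Type*} [AddCommMonoid G] [DecidableEq G] (h : ℕ) (A : Finset G) :
    Finset G :=
  (A.powersetCard h).image fun s => s.sum id

lemma mem_restSumset_two {G : Type*} [AddCommMonoid G] [DecidableEq G] {A : Finset G} {x : G} :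
    x ∈ restSumset 2 A ↔ ∃ a ∈ A, ∃ b ∈ A, a ≠ b ∧ a + b = x := by
  constructor
  · intro hx
    simp only [restSumset, Finset.mem_image, Finset.mem_powersetCard] at hx
    obtain ⟨s, ⟨hsA, hs2⟩, hsum⟩ := hx
    obtain ⟨a, b, hab, rfl⟩ := Finset.card_eq_two.1 hs2
    refine ⟨a, hsA (by simp), b, hsA (by simp), hab, ?_⟩
    rw [← hsum, Finset.sum_pair hab]; rfl
  · rintro ⟨a, ha, b, hb, hab, rfl⟩
    simp only [restSumset, Finset.mem_image, Finset.mem_powersetCard]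
    refine ⟨{a, b}, ⟨?_, Finset.card_eq_two.2 ⟨a, b, hab, rfl⟩⟩, ?_⟩
    · intro z hz; simp only [Finset.mem_insert, Finset.mem_singleton] at hz
      rcases hz with rfl | rfl <;> assumption
    · rw [Finset.sum_pair hab]; rfl

lemma zmod_two_torsion {n : ℕ} [NeZero n] {u v : ZMod n} (hu : u ≠ 0) (hv : v ≠ 0)
    (h2u : u + u = 0) (h2v : v + v = 0) : u = v := by
  have key : ∀ w : ZMod n, w ≠ 0 → w + w = 0 → w.val + w.val = n := by
    intro w hw h2w
    have hcast : ((w.val + w.val : ℕ) : ZMod n) = 0 := by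
      push_cast
      rw [ZMod.natCast_val, ZMod.cast_id]; exact h2w
    have hdvd : n ∣ w.val + w.val := (ZMod.natCast_eq_zero_iff _ n).1 hcast
    have hlt : w.val < n := ZMod.val_lt w
    have hpos : w.val ≠ 0 := fun h => hw ((ZMod.val_eq_zero w).1 h)
    obtain ⟨k, hk⟩ := hdvd
    have hn : 0 < n := Nat.pos_of_ne_zero (NeZero.ne n)
    have hk2 : k < 2 := by
      by_contra h
      push_neg at h
      have : n * 2 ≤ n * k := Nat.mul_le_mul_left n h
      omega
    interval_cases k <;> omega
  exact ZMod.val_injective n (by have := key u hu h2u; have := key v hv h2v; omega)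

theorem stmt6 (n : ℕ) [NeZero n] (hn : 3 ≤ n) :
    (∀ A : Finset (ZMod n), n / 2 + 2 ≤ A.card → restSumset 2 A = Finset.univ) ∧
    (∃ A : Finset (ZMod n), A.card = n / 2 + 1 ∧ restSumset 2 A ≠ Finset.univ) := by
  constructor
  · intro A hA
    apply Finset.eq_univ_of_forall
    intro x
    rw [mem_restSumset_two]
    set C : Finset (ZMod n) := A.image (fun a => x - a) with hCdef
    have hCcard : C.card = A.card := Finset.card_image_of_injective A sub_right_injective
    have hunion : (A ∪ C).card ≤ n := by
      calc (A ∪ C).card ≤ Fintype.card (ZMod n) := Finset.card_le_univ _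
        _ = n := ZMod.card n
    have hBcard : 2 < (A ∩ C).card := by
      have h1 := Finset.card_union_add_card_inter A C
      have h2 : n / 2 * 2 ≥ n - 1 := by omega
      omega
    -- find a in A ∩ C with a + a ≠ x
    have : ∃ a ∈ A ∩ C, a + a ≠ x := by
      by_contra h
      push_neg at h
      obtain ⟨a, b, c, ha, hb, hc, hab, hac, hbc⟩ := Finset.two_lt_card_iff.1 hBcard
      have h2a := h a ha
      have h2b := h b hb
      have h2c := h c hc
      have huv : a - b = a - c := by
        apply zmod_two_torsion (sub_ne_zero.2 hab) (sub_ne_zero.2 hac)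
        · linear_combination h2a - h2b
        · linear_combination h2a - h2c
      exact hbc (by linear_combination -huv)
    obtain ⟨a, haB, hax⟩ := this
    rw [Finset.mem_inter] at haB
    obtain ⟨haA, haC⟩ := haB
    obtain ⟨b, hbA, hbx⟩ := Finset.mem_image.1 haC
    refine ⟨a, haA, b, hbA, ?_, ?_⟩
    · rintro rfl
      apply hax
      linear_combination -hbx
    · linear_combination -hbx
  · refine ⟨(Finset.range (n / 2 + 1)).image (Nat.cast : ℕ → ZMod n), ?_, ?_⟩
    · rw [Finset.card_image_of_injOn, Finset.card_range]
      intro i hi j hj hij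
      simp only [Finset.coe_range, Set.mem_Iio] at hi hj
      have h1 : i < n := by omega
      have h2 : j < n := by omega
      have := congrArg ZMod.val hij
      rwa [ZMod.val_cast_of_lt h1, ZMod.val_cast_of_lt h2] at this
    · intro h
      have h0 : (0 : ZMod n) ∈ restSumset 2 ((Finset.range (n / 2 + 1)).image (Nat.cast : ℕ → ZMod n)) := by
        rw [h]; exact Finset.mem_univ _
      rw [mem_restSumset_two] at h0
      obtain ⟨a, ha, b, hb, hab, hsum⟩ := h0
      obtain ⟨i, hi, rfl⟩ := Finset.mem_image.1 ha
      obtain ⟨j, hj, rfl⟩ := Finset.mem_image.1 hb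
      rw [Finset.mem_range] at hi hj
      have hij : i ≠ j := by rintro rfl; exact hab rfl
      have hcast : ((i + j : ℕ) : ZMod n) = 0 := by push_cast; exact hsum
      have hdvd : n ∣ i + j := (ZMod.natCast_eq_zero_iff _ n).1 hcast
      have hle : i + j ≤ n / 2 + n / 2 := by omega
      rcases Nat.eq_zero_or_pos (i + j) with h0' | h0'
      · omega
      · have := Nat.le_of_dvd h0' hdvd
        have : i + j = n := by omega
        omega
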